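/- Let 0 < β < 1, 0 ≤ c < 1, and M > 0. Then for every real s > 0 with M s^{−β} < 1, the function H(t) := ∑_{n=0}^∞ M^n t^{β n − c} / Γ(β n − c + 1) is defined for t > 0, the improper integral ∫₀^∞ e^{−s t} H(t) dt converges, and ∫₀^∞ e^{−s t} H(t) dt = s^{c−1} / (1 − M s^{−β}). -/

import Mathlib

open MeasureTheory Set

/-- Crude lower bound for the Gamma function: for `a ≥ 1` and any `A > 0`,
`Γ(a) ≥ e^{-2A} A^a`. -/
lemma gamma_lower_bound {a A : ℝ} (ha : 1 ≤ a) (hA : 0 < A) :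
    Real.exp (-(2 * A)) * A ^ a ≤ Real.Gamma a := by
  have ha0 : (0 : ℝ) < a := lt_of_lt_of_le one_pos ha
  rw [Real.Gamma_eq_integral ha0]
  have hint : IntegrableOn (fun x : ℝ => Real.exp (-x) * x ^ (a - 1)) (Ioi 0) :=
    Real.GammaIntegral_convergent ha0
  have hsub : Ioc A (2 * A) ⊆ Ioi (0 : ℝ) := fun x hx => hA.trans hx.1
  have h1 : ∫ x in Ioc A (2 * A), Real.exp (-x) * x ^ (a - 1)
      ≤ ∫ x in Ioi 0, Real.exp (-x) * x ^ (a - 1) := by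
    apply setIntegral_mono_set hint
    · filter_upwards [ae_restrict_mem measurableSet_Ioi] with x hx
      have hx0 : (0 : ℝ) ≤ x := (le_of_lt hx)
      positivity
    · exact HasSubset.Subset.eventuallyLE hsub
  have h2 : Real.exp (-(2 * A)) * A ^ (a - 1) * A
      ≤ ∫ x in Ioc A (2 * A), Real.exp (-x) * x ^ (a - 1) := by
    have hvol : (volume (Ioc A (2 * A))).toReal = A := by
      rw [Real.volume_Ioc, ENNReal.toReal_ofReal (by linarith)]
      ring
    have := setIntegral_ge_of_const_le (c := Real.exp (-(2 * A)) * A ^ (a - 1))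
      measurableSet_Ioc (by simp [Real.volume_Ioc])
      (fun x hx => ?_) (hint.mono_set hsub)
    · rw [measureReal_def, hvol, smul_eq_mul] at this; linarith
    · have hx1 : A ≤ x := le_of_lt hx.1
      have hx2 : x ≤ 2 * A := hx.2
      have e1 : Real.exp (-(2 * A)) ≤ Real.exp (-x) := by
        apply Real.exp_le_exp.2; linarith
      have e2 : A ^ (a - 1) ≤ x ^ (a - 1) :=
        Real.rpow_le_rpow hA.le hx1 (by linarith)
      exact mul_le_mul e1 e2 (Real.rpow_nonneg hA.le _) (Real.exp_pos _).le
  have e3 : Real.exp (-(2 * A)) * A ^ (a - 1) * A = Real.exp (-(2 * A)) * A ^ a := by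
    rw [mul_assoc, ← Real.rpow_add_one hA.ne' (a - 1), sub_add_cancel]
  linarith [e3 ▸ h2]

lemma summable_H (β c M : ℝ) (hβ0 : 0 < β) (hc0 : 0 ≤ c) (hc1 : c < 1) (hM : 0 < M)
    (t : ℝ) (ht : 0 < t) :
    Summable fun n : ℕ => M ^ n * t ^ (β * n - c) / Real.Gamma (β * n - c + 1) := by
  set r := M * t ^ β with hrdef
  have hr0 : 0 < r := by positivity
  set A := max 1 ((2 * r) ^ β⁻¹) with hAdef
  have hA1 : (1 : ℝ) ≤ A := le_max_left _ _
  have hA0 : (0 : ℝ) < A := lt_of_lt_of_le one_pos hA1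
  have hAβ : 2 * r ≤ A ^ β := by
    have h := Real.rpow_le_rpow (Real.rpow_nonneg (by positivity) _)
      (le_max_right 1 ((2 * r) ^ β⁻¹)) hβ0.le
    rwa [← Real.rpow_mul (by positivity), inv_mul_cancel₀ hβ0.ne', Real.rpow_one] at h
  have hAβ0 : 0 < A ^ β := Real.rpow_pos_of_pos hA0 _
  have hhalf : r / A ^ β ≤ 1 / 2 := by
    rw [div_le_div_iff₀ hAβ0 (by norm_num)]
    linarith
  set N := ⌈c / β⌉₊ with hN
  rw [← summable_nat_add_iff N]
  set C := Real.exp (2 * A) * t ^ (-c) / A ^ (1 - c) with hC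
  have hC0 : 0 ≤ C := by positivity
  have hsumg : Summable fun n : ℕ => C * (1 / 2 : ℝ) ^ n :=
    (summable_geometric_of_lt_one (by norm_num) (by norm_num)).mul_left C
  refine Summable.of_nonneg_of_le (fun n => ?_) (fun n => ?_) hsumg
  · have h0 : 0 < Real.Gamma (β * (n + N : ℕ) - c + 1) := by
      apply Real.Gamma_pos_of_pos
      have : (0:ℝ) ≤ β * (n + N : ℕ) := by positivity
      linarith
    have h1 : (0:ℝ) < t ^ (β * (n + N : ℕ) - c) := Real.rpow_pos_of_pos ht _
    positivity
  · set m := n + N with hm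
    have hcm : c ≤ β * m := by
      have h1 : c / β ≤ (N : ℝ) := Nat.le_ceil _
      have h2 : (N : ℝ) ≤ (m : ℝ) := by exact_mod_cast Nat.le_add_left N n
      have : c / β ≤ (m : ℝ) := h1.trans h2
      calc c = β * (c / β) := by field_simp
        _ ≤ β * m := by nlinarith
    have ha1 : (1 : ℝ) ≤ β * m - c + 1 := by linarith
    have hΓ := gamma_lower_bound ha1 hA0
    have hΓ0 : (0:ℝ) < Real.exp (-(2 * A)) * A ^ (β * m - c + 1) := by positivity
    have hnum : (0:ℝ) ≤ M ^ m * t ^ (β * m - c) := by positivity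
    have step1 : M ^ m * t ^ (β * (m:ℕ) - c) / Real.Gamma (β * m - c + 1)
        ≤ M ^ m * t ^ (β * m - c) / (Real.exp (-(2 * A)) * A ^ (β * m - c + 1)) :=
      div_le_div_of_nonneg_left hnum hΓ0 hΓ
    refine step1.trans ?_
    have et : t ^ (β * (m:ℝ) - c) = (t ^ β) ^ m * t ^ (-c) := by
      rw [show β * (m:ℝ) - c = β * m + (-c) by ring, Real.rpow_add ht,
        Real.rpow_mul ht.le, Real.rpow_natCast]
    have eA : A ^ (β * (m:ℝ) - c + 1) = (A ^ β) ^ m * A ^ (1 - c) := by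
      rw [show β * (m:ℝ) - c + 1 = β * m + (1 - c) by ring, Real.rpow_add hA0,
        Real.rpow_mul hA0.le, Real.rpow_natCast]
    rw [et, eA]
    have key_eq : M ^ m * ((t ^ β) ^ m * t ^ (-c)) /
        (Real.exp (-(2 * A)) * ((A ^ β) ^ m * A ^ (1 - c)))
        = C * (r / A ^ β) ^ m := by
      rw [hC, hrdef, Real.exp_neg, div_pow, mul_pow]
      have h1 : (A ^ β) ^ m ≠ 0 := by positivity
      have h2 : A ^ (1 - c) ≠ 0 := by positivity
      have h3 : Real.exp (2 * A) ≠ 0 := Real.exp_ne_zero _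
      field_simp
    rw [key_eq]
    have : (r / A ^ β) ^ m ≤ (1 / 2 : ℝ) ^ m :=
      pow_le_pow_left₀ (by positivity) hhalf m
    have h2 : ((1:ℝ) / 2) ^ m ≤ (1 / 2 : ℝ) ^ n :=
      pow_le_pow_of_le_one (by norm_num) (by norm_num) (Nat.le_add_right n N)
    exact mul_le_mul_of_nonneg_left (this.trans h2) hC0

private theorem laplace_main (β c M : ℝ) (hβ0 : 0 < β) (hβ1 : β < 1)
    (hc0 : 0 ≤ c) (hc1 : c < 1) (hM : 0 < M)
    (s : ℝ) (hs : 0 < s) (hMs : M * s ^ (-β) < 1) :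
    MeasureTheory.IntegrableOn
      (fun t : ℝ => Real.exp (-(s * t)) *
        ∑' n : ℕ, M ^ n * t ^ (β * n - c) / Real.Gamma (β * n - c + 1))
      (Set.Ioi 0) ∧
    ∫ t in Set.Ioi (0:ℝ), Real.exp (-(s * t)) *
        ∑' n : ℕ, M ^ n * t ^ (β * n - c) / Real.Gamma (β * n - c + 1)
      = s ^ (c - 1) / (1 - M * s ^ (-β)) := by
  have ha_pos : ∀ n : ℕ, (0:ℝ) < β * n - c + 1 := by
    intro n
    have : (0:ℝ) ≤ β * n := by positivity
    linarith
  have hΓpos : ∀ n : ℕ, 0 < Real.Gamma (β * n - c + 1) :=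
    fun n => Real.Gamma_pos_of_pos (ha_pos n)
  set G : ℕ → ℝ → ℝ := fun n t =>
    Real.exp (-(s * t)) * (M ^ n * t ^ (β * n - c) / Real.Gamma (β * n - c + 1)) with hG
  set μ := volume.restrict (Ioi (0:ℝ)) with hμ
  -- each G n is nonneg on Ioi 0
  have hGnn : ∀ n : ℕ, ∀ t ∈ Ioi (0:ℝ), 0 ≤ G n t := by
    intro n t ht
    have h1 : (0:ℝ) < t ^ (β * n - c) := Real.rpow_pos_of_pos ht _
    have := (hΓpos n)
    positivity
  -- continuity hence measurability on Ioi 0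
  have hGcont : ∀ n : ℕ, ContinuousOn (G n) (Ioi 0) := by
    intro n
    apply ContinuousOn.mul
    · exact (Real.continuous_exp.comp (continuous_const.mul continuous_id).neg).continuousOn
    · apply ContinuousOn.div_const
      apply ContinuousOn.mul continuousOn_const
      intro x hx
      exact (Real.continuousAt_rpow_const x _ (Or.inl (ne_of_gt hx))).continuousWithinAt
  have hGmeas : ∀ n : ℕ, AEStronglyMeasurable (G n) μ :=
    fun n => (hGcont n).aestronglyMeasurable measurableSet_Ioi
  -- integrability of each G n
  have hGint : ∀ n : ℕ, IntegrableOn (G n) (Ioi 0) := by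
    intro n
    have base : IntegrableOn (fun x : ℝ => Real.exp (-x) * x ^ (β * n - c + 1 - 1)) (Ioi 0) :=
      Real.GammaIntegral_convergent (ha_pos n)
    have base' : IntegrableOn (fun x : ℝ => Real.exp (-x) * x ^ (β * n - c + 1 - 1))
        (Ioi (s * 0)) := by rw [mul_zero]; exact base
    have base2 : IntegrableOn
        (fun t : ℝ => Real.exp (-(s * t)) * (s * t) ^ (β * n - c + 1 - 1)) (Ioi 0) :=
      (integrableOn_Ioi_comp_mul_left_iff
        (fun x : ℝ => Real.exp (-x) * x ^ (β * n - c + 1 - 1)) 0 hs).2 base'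
    have base3 : IntegrableOn (fun t : ℝ =>
        ((s ^ (β * n - c + 1 - 1))⁻¹ * (M ^ n / Real.Gamma (β * n - c + 1))) *
          (Real.exp (-(s * t)) * (s * t) ^ (β * n - c + 1 - 1))) (Ioi 0) :=
      base2.const_mul _
    apply base3.congr_fun _ measurableSet_Ioi
    intro t ht
    have hmul : (s * t) ^ (β * n - c + 1 - 1) = s ^ (β * n - c + 1 - 1) * t ^ (β * n - c + 1 - 1) :=
      Real.mul_rpow hs.le (le_of_lt ht)
    have hsne : s ^ (β * n - c + 1 - 1) ≠ 0 := by positivity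
    rw [hG]
    simp only [add_sub_cancel_right] at hmul ⊢
    have hsne' : s ^ (β * n - c) ≠ 0 := by positivity
    rw [hmul]
    field_simp [(hΓpos n).ne']
  -- value of each integral
  set J : ℕ → ℝ := fun n => M ^ n * (1 / s) ^ (β * n - c + 1) with hJ
  have hGval : ∀ n : ℕ, ∫ t in Ioi (0:ℝ), G n t = J n := by
    intro n
    have base_val := Real.integral_rpow_mul_exp_neg_mul_Ioi (ha_pos n) hs
    calc ∫ t in Ioi (0:ℝ), G n t
        = ∫ t in Ioi (0:ℝ), (M ^ n / Real.Gamma (β * n - c + 1)) *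
            (t ^ (β * n - c + 1 - 1) * Real.exp (-(s * t))) := by
          apply setIntegral_congr_fun measurableSet_Ioi
          intro t ht
          rw [hG]
          simp only [add_sub_cancel_right]
          ring
      _ = (M ^ n / Real.Gamma (β * n - c + 1)) *
            ((1 / s) ^ (β * n - c + 1) * Real.Gamma (β * n - c + 1)) := by
          rw [integral_const_mul, base_val]
      _ = J n := by
          rw [hJ]
          field_simp [(hΓpos n).ne']
  -- geometric series
  set q := M * s ^ (-β) with hq
  have hq0 : 0 ≤ q := by positivity
  have hq1 : q < 1 := hMs
  have hJeq : ∀ n : ℕ, J n = s ^ (c - 1) * q ^ n := by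
    intro n
    rw [hJ, hq]
    have e1 : (1 / s : ℝ) ^ (β * n - c + 1) = s ^ (-(β * n - c + 1)) := by
      rw [one_div, Real.inv_rpow hs.le, ← Real.rpow_neg hs.le]
    have e2 : s ^ (-(β * (n:ℝ) - c + 1)) = (s ^ (-β)) ^ n * s ^ (c - 1) := by
      rw [show -(β * (n:ℝ) - c + 1) = (-β) * n + (c - 1) by ring, Real.rpow_add hs,
        Real.rpow_mul hs.le, Real.rpow_natCast]
    show M ^ n * (1 / s) ^ (β * (n:ℝ) - c + 1) = s ^ (c - 1) * q ^ n
    rw [e1, e2, hq, mul_pow]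
    ring
  have hJnn : ∀ n : ℕ, 0 ≤ J n := by
    intro n
    show (0:ℝ) ≤ M ^ n * (1 / s) ^ (β * (n:ℝ) - c + 1)
    positivity
  have hJsum : Summable J := by
    have h : Summable fun n : ℕ => s ^ (c - 1) * q ^ n :=
      (summable_geometric_of_lt_one hq0 hq1).mul_left _
    exact h.congr fun n => (hJeq n).symm
  have hJtsum : ∑' n, J n = s ^ (c - 1) / (1 - q) := by
    rw [tsum_congr hJeq, tsum_mul_left, tsum_geometric_of_lt_one hq0 hq1, div_eq_mul_inv]
  -- summability of the pointwise series of G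
  have hGsum : ∀ t ∈ Ioi (0:ℝ), Summable fun n : ℕ => G n t := by
    intro t ht
    exact (summable_H β c M hβ0 hc0 hc1 hM t ht).mul_left _
  -- the ENNReal-valued functions
  set φ : ℕ → ℝ → ENNReal := fun n t => ENNReal.ofReal (G n t) with hφ
  have hφmeas : ∀ n : ℕ, AEMeasurable (φ n) μ :=
    fun n => (hGmeas n).aemeasurable.ennreal_ofReal
  have hφtsum : ∀ t ∈ Ioi (0:ℝ), ∑' n, φ n t = ENNReal.ofReal (∑' n, G n t) :=
    fun t ht => (ENNReal.ofReal_tsum_of_nonneg (fun n => hGnn n t ht) (hGsum t ht)).symm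
  have hφint : ∀ n : ℕ, ∫⁻ t, φ n t ∂μ = ENNReal.ofReal (J n) := by
    intro n
    rw [← MeasureTheory.ofReal_integral_eq_lintegral_ofReal (hGint n)]
    · rw [show ∫ t, G n t ∂μ = J n from hGval n]
    · filter_upwards [ae_restrict_mem measurableSet_Ioi] with t ht using hGnn n t ht
  have hφlint : ∫⁻ t, ∑' n, φ n t ∂μ = ENNReal.ofReal (∑' n, J n) := by
    rw [lintegral_tsum hφmeas]
    rw [ENNReal.ofReal_tsum_of_nonneg hJnn hJsum]
    exact tsum_congr hφint
  -- the sum function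
  set F : ℝ → ℝ := fun t => ∑' n : ℕ, G n t with hF
  have hFnn : ∀ t ∈ Ioi (0:ℝ), 0 ≤ F t :=
    fun t ht => tsum_nonneg fun n => hGnn n t ht
  have hFeq : (fun t : ℝ => Real.exp (-(s * t)) *
      ∑' n : ℕ, M ^ n * t ^ (β * n - c) / Real.Gamma (β * n - c + 1)) = F :=
    funext fun t => tsum_mul_left.symm
  -- measurability of F
  have hFaesm : AEStronglyMeasurable F μ := by
    have h1 : AEMeasurable (fun t => ∑' n, φ n t) μ := AEMeasurable.ennreal_tsum hφmeas
    have h2 : AEMeasurable (fun t => (∑' n, φ n t).toReal) μ := h1.ennreal_toReal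
    refine (aemeasurable_congr ?_).1 h2 |>.aestronglyMeasurable
    filter_upwards [ae_restrict_mem measurableSet_Ioi] with t ht
    rw [hφtsum t ht, ENNReal.toReal_ofReal (hFnn t ht)]
  -- finite integral
  have hFfin : HasFiniteIntegral F μ := by
    have heq : (fun t => (‖F t‖₊ : ENNReal)) =ᵐ[μ] fun t => ∑' n, φ n t := by
      filter_upwards [ae_restrict_mem measurableSet_Ioi] with t ht
      rw [hφtsum t ht, ← Real.enorm_eq_ofReal (hFnn t ht)]; rfl
    show (∫⁻ t, ‖F t‖₊ ∂μ) < ⊤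
    calc ∫⁻ t, ‖F t‖₊ ∂μ = ∫⁻ t, ∑' n, φ n t ∂μ := lintegral_congr_ae heq
      _ = ENNReal.ofReal (∑' n, J n) := hφlint
      _ < ⊤ := ENNReal.ofReal_lt_top
  have hFint : IntegrableOn F (Ioi 0) := ⟨hFaesm, hFfin⟩
  -- value of the integral
  have hval : ∑' n, ∫ t, G n t ∂μ = ∫ t, F t ∂μ := by
    apply MeasureTheory.integral_tsum_of_summable_integral_norm hGint
    have hnorm : ∀ n : ℕ, ∫ t, ‖G n t‖ ∂μ = J n := by
      intro n
      rw [← hGval n]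
      apply setIntegral_congr_fun measurableSet_Ioi
      intro t ht
      exact Real.norm_of_nonneg (hGnn n t ht)
    exact hJsum.congr fun n => (hnorm n).symm
  constructor
  · rw [hFeq]; exact hFint
  · rw [hFeq, show ∫ t in Ioi (0:ℝ), F t = ∫ t, F t ∂μ from rfl, ← hval,
      tsum_congr hGval, hJtsum, hq]


/-- For `0 < β < 1`, `0 ≤ c < 1`, `M > 0` and real `s > 0` with `M s^{−β} < 1`, the
function `H(t) = ∑_{n} M^n t^{βn−c} / Γ(βn−c+1)` is defined for `t > 0`, the Laplace
integral `∫₀^∞ e^{−st} H(t) dt` converges and equals `s^{c−1} / (1 − M s^{−β})`. -/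
theorem laplace_transform_H (β c M : ℝ) (hβ0 : 0 < β) (hβ1 : β < 1)
    (hc0 : 0 ≤ c) (hc1 : c < 1) (hM : 0 < M)
    (s : ℝ) (hs : 0 < s) (hMs : M * s ^ (-β) < 1) :
    (∀ t : ℝ, 0 < t →
      Summable fun n : ℕ => M ^ n * t ^ (β * n - c) / Real.Gamma (β * n - c + 1)) ∧
    MeasureTheory.IntegrableOn
      (fun t : ℝ => Real.exp (-(s * t)) *
        ∑' n : ℕ, M ^ n * t ^ (β * n - c) / Real.Gamma (β * n - c + 1))
      (Set.Ioi 0) ∧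
    ∫ t in Set.Ioi (0:ℝ), Real.exp (-(s * t)) *
        ∑' n : ℕ, M ^ n * t ^ (β * n - c) / Real.Gamma (β * n - c + 1)
      = s ^ (c - 1) / (1 - M * s ^ (-β)) := by
  exact ⟨fun t ht => summable_H β c M hβ0 hc0 hc1 hM t ht,
    (laplace_main β c M hβ0 hβ1 hc0 hc1 hM s hs hMs).1,
    (laplace_main β c M hβ0 hβ1 hc0 hc1 hM s hs hMs).2⟩
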